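/- arXiv:1607.08648 — 2 statements merged into one kernel-verified Lean document; each statement's English description precedes it below -/
import Mathlib

section
/- There are no Gaussian integers n, m, n', m' with n·m ≠ 0, gcd(n, m) a unit, gcd(n', m') a unit, m and m' both divisible by 1+i, such that n^2 + (1+i)·m^2 = n'^2 - (1+i)·m'^2 and n·m = n'·m'. -/
open Zsqrtd

namespace ResolventAux

local notation "ℤi" => GaussianInt
local notation "π" => (1 + Zsqrtd.sqrtd : GaussianInt)

lemma sq_sqrtd : (sqrtd : ℤi) ^ 2 = -1 := by decide

lemma pi_sq : (π : ℤi) ^ 2 = 2 * sqrtd := by linear_combination sq_sqrtd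

lemma two_eq : (2 : ℤi) = -sqrtd * π ^ 2 := by
  linear_combination (sqrtd + 2) * sq_sqrtd

lemma pi_pow4 : (π : ℤi) ^ 4 = -4 := by
  linear_combination ((π:ℤi)^2 + 2*sqrtd) * pi_sq + 4 * sq_sqrtd

lemma pi_ne_zero : (π : ℤi) ≠ 0 := by decide

lemma pi_not_unit : ¬ IsUnit (π : ℤi) := by
  rw [← Zsqrtd.norm_eq_one_iff]
  decide

lemma prime_pi : Prime (π : ℤi) := by
  rw [← UniqueFactorizationMonoid.irreducible_iff_prime]
  constructor
  · exact pi_not_unit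
  · intro a b hab
    have hn : (Zsqrtd.norm a).natAbs * (Zsqrtd.norm b).natAbs = 2 := by
      have := congrArg (fun z : ℤi => (Zsqrtd.norm z).natAbs) hab.symm
      simpa [Zsqrtd.norm_mul, Int.natAbs_mul, show (Zsqrtd.norm (1 + sqrtd : ℤi)).natAbs = 2 by decide] using this
    rcases (Nat.prime_two.eq_one_or_self_of_dvd _ ⟨_, hn.symm⟩ : (Zsqrtd.norm a).natAbs = 1 ∨ (Zsqrtd.norm a).natAbs = 2) with h | h
    · exact Or.inl (Zsqrtd.norm_eq_one_iff.mp h)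
    · right
      rw [h] at hn
      have : (Zsqrtd.norm b).natAbs = 1 := by omega
      exact Zsqrtd.norm_eq_one_iff.mp this

lemma pi_dvd_two : (π : ℤi) ∣ 2 := ⟨-sqrtd * π, by linear_combination two_eq⟩

lemma pi_dvd_iff (u : ℤi) : (π : ℤi) ∣ u ↔ (2:ℤ) ∣ (u.re + u.im) := by
  constructor
  · rintro ⟨c, rfl⟩
    refine ⟨c.re, ?_⟩
    simp [Zsqrtd.re_mul, Zsqrtd.im_mul]
    ring
  · rintro ⟨k, hk⟩
    refine ⟨⟨k, k - u.re⟩, ?_⟩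
    have h1 : u.re = u.re := rfl
    ext
    · simp only [Zsqrtd.re_mul, Zsqrtd.re_add, Zsqrtd.re_one, Zsqrtd.re_sqrtd,
        Zsqrtd.im_add, Zsqrtd.im_one, Zsqrtd.im_sqrtd]
      omega
    · simp only [Zsqrtd.im_mul, Zsqrtd.re_add, Zsqrtd.re_one, Zsqrtd.re_sqrtd,
        Zsqrtd.im_add, Zsqrtd.im_one, Zsqrtd.im_sqrtd]
      omega

lemma odd_sq {u : ℤi} (hu : ¬ (π:ℤi) ∣ u) : ∃ t c : ℤi, (t = 1 ∨ t = -1) ∧ u^2 = t + 4*c := by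
  rw [pi_dvd_iff] at hu
  rcases Int.even_or_odd u.re with ⟨x, hx⟩ | ⟨x, hx⟩
  · -- re even, so im odd
    have : Odd u.im := by
      rcases Int.even_or_odd u.im with ⟨y, hy⟩ | h
      · exfalso; exact hu ⟨x + y, by omega⟩
      · exact h
    obtain ⟨y, hy⟩ := this
    refine ⟨-1, ⟨x^2 - y^2 - y, (2*y+1)*x⟩, Or.inr rfl, ?_⟩
    ext
    · simp [pow_two, Zsqrtd.re_mul]
      rw [hx, hy]; ring
    · simp [pow_two, Zsqrtd.im_mul]
      rw [hx, hy]; ring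
  · -- re odd, so im even
    have : Even u.im := by
      rcases Int.even_or_odd u.im with h | ⟨y, hy⟩
      · exact h
      · exfalso; exact hu ⟨x + y + 1, by omega⟩
    obtain ⟨y, hy⟩ := this
    refine ⟨1, ⟨x^2 + x - y^2, (2*x+1)*y⟩, Or.inl rfl, ?_⟩
    ext
    · simp [pow_two, Zsqrtd.re_mul]
      rw [hx, hy]; ring
    · simp [pow_two, Zsqrtd.im_mul]
      rw [hx, hy]; ring

lemma odd_pow4 {u : ℤi} (hu : ¬ (π:ℤi) ∣ u) : ∃ c : ℤi, u^4 = 1 + 4*c := by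
  obtain ⟨t, c, ht, hc⟩ := odd_sq hu
  refine ⟨2*t*c + 4*c^2, ?_⟩
  have h4 : u^4 = (u^2)^2 := by ring
  rcases ht with rfl | rfl
  · rw [h4, hc]; ring
  · rw [h4, hc]; ring

lemma unit_eq {u : ℤi} (hu : IsUnit u) : u = 1 ∨ u = -1 ∨ u = sqrtd ∨ u = -sqrtd := by
  have h1 : (Zsqrtd.norm u).natAbs = 1 := Zsqrtd.norm_eq_one_iff.mpr hu
  have h2 : u.re * u.re + u.im * u.im = 1 := by
    have hn : Zsqrtd.norm u = 1 := by
      have := Zsqrtd.norm_nonneg (by norm_num : (-1:ℤ) ≤ 0) u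
      omega
    simpa [Zsqrtd.norm_def] using hn
  have hre1 : -1 ≤ u.re := by nlinarith [sq_nonneg (u.re + 1), sq_nonneg u.im]
  have hre2 : u.re ≤ 1 := by nlinarith [sq_nonneg (u.re - 1), sq_nonneg u.im]
  interval_cases h : u.re
  · have him : u.im * u.im = 0 := by omega
    have him0 : u.im = 0 := by nlinarith
    right; left
    ext <;> simp [h, him0]
  · have him : u.im * u.im = 1 := by omega
    rcases mul_self_eq_one_iff.mp him with him1 | him1
    · right; right; left
      ext <;> simp [h, him1]
    · right; right; right
      ext <;> simp [h, him1]
  · have him : u.im * u.im = 0 := by omega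
    have him0 : u.im = 0 := by nlinarith
    left
    ext <;> simp [h, him0]

lemma unit_pow4 {u : ℤi} (hu : IsUnit u) : u^4 = 1 := by
  rcases unit_eq hu with rfl | rfl | rfl | rfl
  · ring
  · ring
  · linear_combination (sqrtd^2 - 1) * sq_sqrtd
  · linear_combination (sqrtd^2 - 1) * sq_sqrtd

lemma unit_sq {u : ℤi} (hu : IsUnit u) : u^2 = 1 ∨ u^2 = -1 := by
  rcases unit_eq hu with rfl | rfl | rfl | rfl
  · left; ring
  · left; ring
  · right; exact sq_sqrtd
  · right; linear_combination sq_sqrtd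

lemma four_dvd_iff (u : ℤi) : (4:ℤi) ∣ u ↔ ((4:ℤ) ∣ u.re ∧ (4:ℤ) ∣ u.im) := by
  have h : ((4:ℤ) : ℤi) = 4 := by norm_num
  rw [← h, Zsqrtd.intCast_dvd]

lemma pow_eq_pow {u v : ℤi} {a b : ℕ} (hu : ¬(π:ℤi) ∣ u) (hv : ¬(π:ℤi) ∣ v)
    (h : (π:ℤi)^a * u = π^b * v) : a = b ∧ u = v := by
  have key : ∀ {a b : ℕ} {u v : ℤi}, ¬(π:ℤi) ∣ u → ¬(π:ℤi) ∣ v →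
      (π:ℤi)^a * u = π^b * v → a ≤ b → a = b ∧ u = v := by
    intro a b u v hu hv h hab
    obtain ⟨c, rfl⟩ := Nat.exists_eq_add_of_le hab
    rw [pow_add, mul_assoc] at h
    have h2 := mul_left_cancel₀ (pow_ne_zero a pi_ne_zero) h
    rcases Nat.eq_zero_or_pos c with rfl | hc
    · simp only [pow_zero, one_mul] at h2
      exact ⟨by simp, h2⟩
    · exfalso
      apply hu
      rw [h2]
      exact Dvd.dvd.mul_right (dvd_pow_self _ (by omega : c ≠ 0)) v
  rcases le_total a b with hab | hab
  · exact key hu hv h hab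
  · obtain ⟨h1, h2⟩ := key hv hu h.symm hab
    exact ⟨h1.symm, h2.symm⟩

lemma sqrtd_unit : IsUnit (sqrtd : ℤi) :=
  IsUnit.of_mul_eq_one (-sqrtd) (by linear_combination -sq_sqrtd)

lemma branch_core (j : ℕ) (x y z θ δ S L : ℤi)
    (hθu : IsUnit θ) (hδ : δ = 1 ∨ δ = -1)
    (_hx : ¬(π:ℤi) ∣ x) (hxy : IsRelPrime x y)
    (hS : z - θ*x^2 = π^2 * S) (hL : z + θ*x^2 = π^(4*j+4) * L)
    (hS0 : ¬(π:ℤi) ∣ S) (hL0 : ¬(π:ℤi) ∣ L)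
    (hSL : S * L = δ * y^4) :
    ∃ a b ε' δ' : ℤi, IsUnit ε' ∧ (δ' = 1 ∨ δ' = -1) ∧ ¬(π:ℤi) ∣ a ∧ ¬(π:ℤi) ∣ b ∧
      b ≠ 0 ∧ IsRelPrime a b ∧ ε' * x^2 = a^4 + δ'*π^(4*j+2)*b^4 := by
  have hδ2 : δ * δ = 1 := by rcases hδ with rfl | rfl <;> ring
  have hSne : S ≠ 0 := fun h => hS0 (h ▸ dvd_zero _)
  have hLne : L ≠ 0 := fun h => hL0 (h ▸ dvd_zero _)
  have hdvdL : ∀ d : ℤi, d ∣ δ * L → d ∣ L := by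
    intro d hd
    rcases hδ with rfl | rfl
    · simpa using hd
    · rw [neg_one_mul] at hd; exact (dvd_neg).mp hd
  have hrel : IsRelPrime S L := by
    intro d hdS hdL
    by_contra hdu
    have hd0 : d ≠ 0 := fun h => hSne (zero_dvd_iff.mp (h ▸ hdS))
    obtain ⟨p, hpirr, hpd⟩ := WfDvdMonoid.exists_irreducible_factor hdu hd0
    have hp : Prime p := UniqueFactorizationMonoid.irreducible_iff_prime.mp hpirr
    have hpS : p ∣ S := hpd.trans hdS
    have hpL : p ∣ L := hpd.trans hdL
    have hpy : p ∣ y := by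
      have h1 : p ∣ δ * y^4 := hSL ▸ hpS.mul_right L
      have h2 : p ∣ y^4 := by
        rcases hδ with rfl | rfl
        · simpa using h1
        · rw [neg_one_mul] at h1; exact (dvd_neg).mp h1
      exact hp.dvd_of_dvd_pow h2
    have hpx : p ∣ x := by
      have h1 : p ∣ (z + θ*x^2) - (z - θ*x^2) := dvd_sub (hL ▸ hpL.mul_left _) (hS ▸ hpS.mul_left _)
      have h1' : p ∣ 2*θ*x^2 := by
        have he : (z + θ*x^2) - (z - θ*x^2) = 2*θ*x^2 := by ring
        rwa [he] at h1
      have h2 : p ∣ -sqrtd * ((π:ℤi)^2 * (θ * x^2)) := by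
        have he : 2*θ*x^2 = -sqrtd * ((π:ℤi)^2 * (θ * x^2)) := by
          linear_combination θ*x^2*two_eq
        rwa [he] at h1'
      have h3 : p ∣ (π:ℤi)^2 * (θ * x^2) := (hp.dvd_mul.mp h2).resolve_left
        (fun hd => hp.not_unit (isUnit_of_dvd_unit hd sqrtd_unit.neg))
      have hppi : ¬ p ∣ (π:ℤi) := by
        intro hppi
        have hass : Associated p π := hpirr.associated_of_dvd prime_pi.irreducible hppi
        exact hS0 ((hass.symm.dvd).trans hpS)
      have h4 : p ∣ θ * x^2 := (hp.dvd_mul.mp h3).resolve_left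
        (fun hd => hppi (hp.dvd_of_dvd_pow hd))
      have h5 : p ∣ x^2 := (hp.dvd_mul.mp h4).resolve_left
        (fun hd => hp.not_unit (isUnit_of_dvd_unit hd hθu))
      exact hp.dvd_of_dvd_pow h5
    exact hp.not_unit (hxy hpx hpy)
  have hrel2 : IsRelPrime S (δ*L) := fun {d} hdS hdL' => hrel hdS (hdvdL d hdL')
  have hcop : IsCoprime S (δ*L) := hrel2.isCoprime
  have hprod : S * (δ*L) = y^4 := by linear_combination δ * hSL + y^4 * hδ2
  obtain ⟨a, ha⟩ := exists_associated_pow_of_mul_eq_pow' hcop hprod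
  obtain ⟨u₁, hu₁⟩ := ha
  obtain ⟨b, hb⟩ := exists_associated_pow_of_mul_eq_pow' hcop.symm (by rw [mul_comm] at hprod; exact hprod)
  obtain ⟨u₂, hu₂⟩ := hb
  have han : a ≠ 0 := by
    rintro rfl
    apply hSne
    rw [← hu₁]; ring
  have hbn : b ≠ 0 := by
    rintro rfl
    apply hLne
    have h0 : δ * L = 0 := by rw [← hu₂]; ring
    rcases hδ with rfl | rfl
    · simpa using h0
    · simpa using h0
  have hy4 : (a*b)^4 * ((u₁ : ℤi)*(u₂:ℤi)) = y^4 := by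
    rw [← hprod, ← hu₁, ← hu₂]; ring
  have habne : a*b ≠ 0 := mul_ne_zero han hbn
  have hab_dvd : a*b ∣ y := by
    have hdvd : (a*b)^4 ∣ y^4 := ⟨(u₁:ℤi)*(u₂:ℤi), hy4.symm⟩
    exact (IsIntegrallyClosed.pow_dvd_pow_iff (by norm_num : (4:ℕ) ≠ 0)).mp hdvd
  obtain ⟨c, hc⟩ := hab_dvd
  have hc4 : c^4 = (u₁:ℤi)*(u₂:ℤi) := by
    have h' : (a*b)^4 * ((u₁:ℤi)*(u₂:ℤi)) = (a*b)^4 * c^4 := by rw [hy4, hc]; ring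
    exact (mul_left_cancel₀ (pow_ne_zero _ habne) h').symm
  have hcu : IsUnit c := by
    have : IsUnit (c^4) := by rw [hc4]; exact u₁.isUnit.mul u₂.isUnit
    exact (isUnit_pow_iff (by norm_num : (4:ℕ) ≠ 0)).mp this
  have hu12 : (u₁:ℤi)*(u₂:ℤi) = 1 := by rw [← hc4]; exact unit_pow4 hcu
  have hu2sq : ((u₂:ℤi))^2 = 1 ∨ ((u₂:ℤi))^2 = -1 := unit_sq u₂.isUnit
  -- final equation
  have hLval : L = δ*((u₂:ℤi)*b^4) := by linear_combination (-δ)*hu₂ - L*hδ2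
  have hexp : (π:ℤi)^(4*j+4) = π^(4*j+2)*π^2 := by rw [← pow_add]
  have hS' : z - θ*x^2 = π^2*(a^4*(u₁:ℤi)) := by rw [hS, ← hu₁]
  have hL' : z + θ*x^2 = π^2*(π^(4*j+2)*(δ*(u₂:ℤi)*b^4)) := by
    rw [hL, hLval, hexp]; ring
  have hfin : (π:ℤi)^2 * (-sqrtd*θ*x^2) = π^2 * (π^(4*j+2)*(δ*(u₂:ℤi)*b^4) - a^4*(u₁:ℤi)) := by
    linear_combination hL' - hS' - θ*x^2*two_eq
  have hfin2 : -sqrtd*θ*x^2 = π^(4*j+2)*(δ*(u₂:ℤi)*b^4) - a^4*(u₁:ℤi) :=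
    mul_left_cancel₀ (pow_ne_zero 2 pi_ne_zero) hfin
  refine ⟨a, b, sqrtd*(u₂:ℤi)*θ, -(δ*((u₂:ℤi))^2), ?_, ?_, ?_, ?_, hbn, ?_, ?_⟩
  · exact (sqrtd_unit.mul u₂.isUnit).mul hθu
  · rcases hδ with rfl | rfl <;> rcases hu2sq with h2 | h2 <;> rw [h2] <;> norm_num
  · intro h
    apply hS0
    rw [← hu₁]
    exact Dvd.dvd.mul_right (h.trans (dvd_pow_self a (by norm_num))) _
  · intro h
    apply hL0
    apply hdvdL
    rw [← hu₂]
    exact Dvd.dvd.mul_right (h.trans (dvd_pow_self b (by norm_num))) _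
  · intro d hda hdb
    refine hrel ?_ ?_
    · exact hda.trans ⟨a^3*(u₁:ℤi), by rw [← hu₁]; ring⟩
    · refine hdvdL d ?_
      exact hdb.trans ⟨b^3*(u₂:ℤi), by rw [← hu₂]; ring⟩
  · linear_combination (-(u₂:ℤi))*hfin2 + a^4*hu12

lemma descent_core (j : ℕ) (x y z θ δ : ℤi)
    (hθu : IsUnit θ) (hδ : δ = 1 ∨ δ = -1)
    (hx : ¬(π:ℤi) ∣ x) (hy : ¬(π:ℤi) ∣ y) (hy0 : y ≠ 0) (hxy : IsRelPrime x y)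
    (hz : ¬(π:ℤi) ∣ z)
    (hPQ : (z - θ*x^2) * (z + θ*x^2) = δ * π^(4*j+6) * y^4) :
    ∃ a b ε' δ' : ℤi, IsUnit ε' ∧ (δ' = 1 ∨ δ' = -1) ∧ ¬(π:ℤi) ∣ a ∧ ¬(π:ℤi) ∣ b ∧
      b ≠ 0 ∧ IsRelPrime a b ∧ ε' * x^2 = a^4 + δ'*π^(4*j+2)*b^4 := by
  have hδ0 : δ ≠ 0 := by rcases hδ with rfl | rfl <;> norm_num
  have hRne : δ * (π:ℤi)^(4*j+6) * y^4 ≠ 0 :=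
    mul_ne_zero (mul_ne_zero hδ0 (pow_ne_zero _ pi_ne_zero)) (pow_ne_zero _ hy0)
  have hPne : z - θ*x^2 ≠ 0 := fun h => hRne (by rw [← hPQ, h, zero_mul])
  have hQne : z + θ*x^2 ≠ 0 := fun h => hRne (by rw [← hPQ, h, mul_zero])
  have hpi2x : (π:ℤi) ∣ 2*θ*x^2 := Dvd.dvd.mul_right (Dvd.dvd.mul_right pi_dvd_two θ) _
  have hPorQ : (π:ℤi) ∣ z - θ*x^2 ∨ (π:ℤi) ∣ z + θ*x^2 := by
    apply prime_pi.dvd_mul.mp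
    rw [hPQ]
    exact Dvd.dvd.mul_right (Dvd.dvd.mul_left (dvd_pow_self _ (by omega : 4*j+6 ≠ 0)) δ) _
  have hdvdP : (π:ℤi) ∣ z - θ*x^2 ∧ (π:ℤi) ∣ z + θ*x^2 := by
    rcases hPorQ with h | h
    · refine ⟨h, ?_⟩
      have he : z + θ*x^2 = (z - θ*x^2) + 2*θ*x^2 := by ring
      rw [he]; exact dvd_add h hpi2x
    · refine ⟨?_, h⟩
      have he : z - θ*x^2 = (z + θ*x^2) - 2*θ*x^2 := by ring
      rw [he]; exact dvd_sub h hpi2x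
  obtain ⟨α, P₀, hP0, hPfac⟩ := WfDvdMonoid.max_power_factor hPne prime_pi.irreducible
  obtain ⟨β, Q₀, hQ0, hQfac⟩ := WfDvdMonoid.max_power_factor hQne prime_pi.irreducible
  have hkey : (π:ℤi)^(α+β) * (P₀*Q₀) = π^(4*j+6) * (δ*y^4) := by
    rw [pow_add]
    linear_combination hPQ - ((π:ℤi)^β*Q₀)*hPfac - (z - θ*x^2)*hQfac
  have hnP₀Q₀ : ¬ (π:ℤi) ∣ P₀*Q₀ := fun h => (prime_pi.dvd_mul.mp h).elim hP0 hQ0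
  have hnR : ¬ (π:ℤi) ∣ δ*y^4 := by
    intro h
    have h2 : (π:ℤi) ∣ y^4 := by
      rcases hδ with rfl | rfl
      · simpa using h
      · rw [neg_one_mul] at h; exact (dvd_neg).mp h
    exact hy (prime_pi.dvd_of_dvd_pow h2)
  obtain ⟨hαβ, hPQ0⟩ := pow_eq_pow hnP₀Q₀ hnR hkey
  have hα1 : 1 ≤ α := by
    rcases Nat.eq_zero_or_pos α with rfl | h
    · exfalso; apply hP0
      rw [pow_zero, one_mul] at hPfac
      rw [← hPfac]; exact hdvdP.1
    · exact h
  have hβ1 : 1 ≤ β := by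
    rcases Nat.eq_zero_or_pos β with rfl | h
    · exfalso; apply hQ0
      rw [pow_zero, one_mul] at hQfac
      rw [← hQfac]; exact hdvdP.2
    · exact h
  have h2z : 2*z = (π:ℤi)^2*(-sqrtd*z) := by linear_combination z*two_eq
  have h2z3 : ¬ (π:ℤi)^3 ∣ 2*z := by
    rintro ⟨c, hc⟩
    apply hz
    have h1 : (π:ℤi)^2 * (-sqrtd*z) = π^2*(π*c) := by linear_combination hc - z*two_eq
    have h2 := mul_left_cancel₀ (pow_ne_zero 2 pi_ne_zero) h1
    exact ⟨sqrtd*c, by linear_combination sqrtd*h2 + z*sq_sqrtd⟩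
  have hsplit : α = 2 ∨ β = 2 := by
    by_contra hcon
    push_neg at hcon
    obtain ⟨hα2, hβ2⟩ := hcon
    have hminle : α ≤ 2 ∨ β ≤ 2 := by
      by_contra hc
      push_neg at hc
      apply h2z3
      have hsum : 2*z = (z - θ*x^2) + (z + θ*x^2) := by ring
      rw [hsum]
      exact dvd_add (hPfac ▸ Dvd.dvd.mul_right (pow_dvd_pow _ (by omega)) P₀)
        (hQfac ▸ Dvd.dvd.mul_right (pow_dvd_pow _ (by omega)) Q₀)
    have hβge : 2 ≤ β ∨ 2 ≤ α := by omega
    rcases hminle with h | h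
    · have hA : α = 1 := by omega
      have hQ2 : (π:ℤi)^2 ∣ z + θ*x^2 := hQfac ▸ Dvd.dvd.mul_right (pow_dvd_pow _ (by omega)) Q₀
      have hP2 : (π:ℤi)^2 ∣ z - θ*x^2 := by
        have he : z - θ*x^2 = 2*z - (z + θ*x^2) := by ring
        rw [he]; exact dvd_sub ⟨-sqrtd*z, h2z⟩ hQ2
      rw [hPfac, hA, pow_one] at hP2
      obtain ⟨c, hc⟩ := hP2
      apply hP0
      refine ⟨c, mul_left_cancel₀ pi_ne_zero ?_⟩
      linear_combination hc
    · have hB : β = 1 := by omega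
      have hP2 : (π:ℤi)^2 ∣ z - θ*x^2 := hPfac ▸ Dvd.dvd.mul_right (pow_dvd_pow _ (by omega)) P₀
      have hQ2 : (π:ℤi)^2 ∣ z + θ*x^2 := by
        have he : z + θ*x^2 = 2*z - (z - θ*x^2) := by ring
        rw [he]; exact dvd_sub ⟨-sqrtd*z, h2z⟩ hP2
      rw [hQfac, hB, pow_one] at hQ2
      obtain ⟨c, hc⟩ := hQ2
      apply hQ0
      refine ⟨c, mul_left_cancel₀ pi_ne_zero ?_⟩
      linear_combination hc
  rcases hsplit with hA | hB
  · have hBv : β = 4*j+4 := by omega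
    refine branch_core j x y z θ δ P₀ Q₀ hθu hδ hx hxy ?_ ?_ hP0 hQ0 hPQ0
    · rw [hPfac, hA]
    · rw [hQfac, hBv]
  · have hAv : α = 4*j+4 := by omega
    refine branch_core j x y z (-θ) δ Q₀ P₀ hθu.neg hδ hx hxy ?_ ?_ hQ0 hP0
      (by rw [mul_comm]; exact hPQ0)
    · have he : z - -θ*x^2 = z + θ*x^2 := by ring
      rw [he, hQfac, hB]
    · have he : z + -θ*x^2 = z - θ*x^2 := by ring
      rw [he, hPfac, hAv]

lemma z_not_pi {k : ℕ} (hk : k ≠ 0) {x y z ε δ : ℤi} (hx : ¬(π:ℤi) ∣ x)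
    (heq : ε * z^2 = x^4 + δ*π^k*y^4) (hz : (π:ℤi) ∣ z) : False := by
  apply hx
  apply prime_pi.dvd_of_dvd_pow (n := 4)
  have h1 : (π:ℤi) ∣ ε*z^2 := Dvd.dvd.mul_left (hz.trans (dvd_pow_self z (by norm_num))) ε
  rw [heq] at h1
  have h2 : (π:ℤi) ∣ δ*π^k*y^4 :=
    Dvd.dvd.mul_right (Dvd.dvd.mul_left (dvd_pow_self _ hk) δ) _
  have h3 := dvd_sub h1 h2
  have he : x^4 + δ*(π:ℤi)^k*y^4 - δ*(π:ℤi)^k*y^4 = x^4 := by ring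
  rwa [he] at h3

lemma no_quartic : ∀ j : ℕ, ∀ x y z ε δ : ℤi, IsUnit ε → (δ = 1 ∨ δ = -1) →
    ¬(π:ℤi) ∣ x → ¬(π:ℤi) ∣ y → y ≠ 0 → IsRelPrime x y →
    ε * z^2 ≠ x^4 + δ * π^(4*j+2) * y^4 := by
  intro j
  induction j with
  | zero =>
    intro x y z ε δ hε hδ hx hy hy0 hxy heq
    have hz : ¬(π:ℤi) ∣ z := fun h => z_not_pi (by norm_num) hx heq h
    obtain ⟨t, r, ht, hzsq⟩ := odd_sq hz
    obtain ⟨s, hx4⟩ := odd_pow4 hx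
    obtain ⟨s', hy4⟩ := odd_pow4 hy
    have h4 : (4:ℤi) ∣ (ε*t - 1 - 2*sqrtd*δ) := by
      refine ⟨-(ε*r) + s + 2*sqrtd*δ*s', ?_⟩
      linear_combination heq - ε*hzsq + hx4 + δ*y^4*pi_sq + 2*sqrtd*δ*hy4
    rcases unit_eq hε with rfl|rfl|rfl|rfl <;> rcases ht with rfl|rfl <;> rcases hδ with rfl|rfl <;>
      (rw [four_dvd_iff] at h4; revert h4; decide)
  | succ i ih =>
    intro x y z ε δ hε hδ hx hy hy0 hxy heq
    have hz : ¬(π:ℤi) ∣ z := fun h => z_not_pi (by norm_num) hx heq h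
    have heq' : ε * z^2 = x^4 + δ * π^(4*i+6) * y^4 := by
      rw [show 4*i+6 = 4*(i+1)+2 by omega]; exact heq
    obtain ⟨t, r, ht, hzsq⟩ := odd_sq hz
    obtain ⟨s, hx4⟩ := odd_pow4 hx
    have hexp : (π:ℤi)^(4*i+6) = π^(4*i+2) * π^4 := by rw [← pow_add]
    have h4 : (4:ℤi) ∣ (ε*t - 1) := by
      refine ⟨s - δ*(π^(4*i+2))*y^4 - ε*r, ?_⟩
      linear_combination heq' - ε*hzsq + hx4 + δ*y^4*hexp + δ*y^4*(π:ℤi)^(4*i+2)*pi_pow4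
    have hεt : (ε = 1 ∧ t = 1) ∨ (ε = -1 ∧ t = -1) := by
      rcases unit_eq hε with rfl|rfl|rfl|rfl <;> rcases ht with rfl|rfl <;>
        first
          | (left; exact ⟨rfl, rfl⟩)
          | (right; exact ⟨rfl, rfl⟩)
          | (exfalso; rw [four_dvd_iff] at h4; revert h4; decide)
    rcases hεt with ⟨rfl, rfl⟩ | ⟨rfl, rfl⟩
    · have hPQ : (z - 1*x^2) * (z + 1*x^2) = δ * π^(4*i+6) * y^4 := by
        linear_combination heq'
      obtain ⟨a, b, ε', δ', hε'u, hδ', hπa, hπb, hb0, hab, heq2⟩ :=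
        descent_core i x y z 1 δ isUnit_one hδ hx hy hy0 hxy hz hPQ
      exact ih a b x ε' δ' hε'u hδ' hπa hπb hb0 hab heq2
    · have hδ' : -δ = 1 ∨ -δ = -1 := by
        rcases hδ with rfl | rfl
        · right; norm_num
        · left; norm_num
      have hPQ : (z - sqrtd*x^2) * (z + sqrtd*x^2) = (-δ) * π^(4*i+6) * y^4 := by
        linear_combination -heq' - x^4*sq_sqrtd
      obtain ⟨a, b, ε', δ', hε'u, hδ'', hπa, hπb, hb0, hab, heq2⟩ :=
        descent_core i x y z sqrtd (-δ) sqrtd_unit hδ' hx hy hy0 hxy hz hPQ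
      exact ih a b x ε' δ' hε'u hδ'' hπa hπb hb0 hab heq2

end ResolventAux

open ResolventAux in
/-- The resolvent system arising from `x⁴ + (1+i)·y² = z⁴` has no solutions:
there are no Gaussian integers `n, m, n', m'` with `n * m ≠ 0`, `gcd (n, m)` a
unit, `gcd (n', m')` a unit, `m` and `m'` both divisible by `1 + i`, such that
`n² + (1+i)·m² = n'² - (1+i)·m'²` and `n·m = n'·m'`. -/
theorem no_solution_resolvent_system_one_add_i :
    ¬ ∃ n m n' m' : GaussianInt, n * m ≠ 0 ∧
      (∀ d : GaussianInt, d ∣ n → d ∣ m → IsUnit d) ∧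
      (∀ d : GaussianInt, d ∣ n' → d ∣ m' → IsUnit d) ∧
      (1 + sqrtd) ∣ m ∧ (1 + sqrtd) ∣ m' ∧
      n ^ 2 + (1 + sqrtd) * m ^ 2 = n' ^ 2 - (1 + sqrtd) * m' ^ 2 ∧
      n * m = n' * m' := by
  rintro ⟨n, m, n', m', hnm0, hnm, hn'm', hm, hm', heq, hprod⟩
  have hπn : ¬ (1 + sqrtd : GaussianInt) ∣ n := fun h => pi_not_unit (hnm _ h hm)
  set w : GaussianInt := n^2 + (1+sqrtd)*m^2 with hw
  have hπw : ¬ (1 + sqrtd : GaussianInt) ∣ w := by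
    intro h
    apply hπn
    apply prime_pi.dvd_of_dvd_pow (n := 2)
    have h2 : (1 + sqrtd : GaussianInt) ∣ (1+sqrtd)*m^2 := Dvd.dvd.mul_right (dvd_refl _) _
    have h3 := dvd_sub h h2
    have he : w - (1+sqrtd)*m^2 = n^2 := by rw [hw]; ring
    rwa [he] at h3
  obtain ⟨τ, q, hq0, hfac⟩ := WfDvdMonoid.max_power_factor hnm0 prime_pi.irreducible
  have hq_ne : q ≠ 0 := by
    rintro rfl
    rw [mul_zero] at hfac
    exact hnm0 hfac
  have hrel : IsRelPrime w q := by
    intro d hdw hdq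
    by_contra hdu
    have hd0 : d ≠ 0 := fun h => hq_ne (zero_dvd_iff.mp (h ▸ hdq))
    obtain ⟨p, hpirr, hpd⟩ := WfDvdMonoid.exists_irreducible_factor hdu hd0
    have hp : Prime p := UniqueFactorizationMonoid.irreducible_iff_prime.mp hpirr
    have hpq : p ∣ q := hpd.trans hdq
    have hpw : p ∣ w := hpd.trans hdw
    have hpnm : p ∣ n*m := hpq.trans ⟨(1+sqrtd)^τ, by rw [hfac]; ring⟩
    have hpπ : ¬ p ∣ (1 + sqrtd : GaussianInt) := by
      intro h
      have hass : Associated p (1+sqrtd) := hpirr.associated_of_dvd prime_pi.irreducible h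
      exact hq0 ((hass.symm.dvd).trans hpq)
    rcases hp.dvd_mul.mp hpnm with hpn | hpm
    · have h1 : p ∣ (1+sqrtd)*m^2 := by
        have he : (1+sqrtd)*m^2 = w - n^2 := by rw [hw]; ring
        rw [he]
        exact dvd_sub hpw (dvd_pow hpn (by norm_num))
      rcases hp.dvd_mul.mp h1 with h2 | h2
      · exact hpπ h2
      · exact hp.not_unit (hnm p hpn (hp.dvd_of_dvd_pow h2))
    · have h1 : p ∣ n^2 := by
        have he : n^2 = w - (1+sqrtd)*m^2 := by rw [hw]; ring
        rw [he]
        exact dvd_sub hpw (Dvd.dvd.mul_left (dvd_pow hpm (by norm_num)) _)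
      exact hp.not_unit (hnm p (hp.dvd_of_dvd_pow h1) hpm)
  have hkey : ((n^2 - (1+sqrtd)*m^2)*(n'^2+(1+sqrtd)*m'^2))^2
      = w^4 - 16*(1+sqrtd)^2*(n*m)^4 := by
    linear_combination (-(w + (n^2+(1+sqrtd)*m^2))*((n'^2-(1+sqrtd)*m'^2)^2
        + 4*(1+sqrtd)*(n'*m')^2))*hw
      + (-(w^2-4*(1+sqrtd)*(n*m)^2)*(w + (n'^2-(1+sqrtd)*m'^2)))*heq
      + (-4*(1+sqrtd)*(w^2-4*(1+sqrtd)*(n*m)^2)*(n*m+n'*m'))*hprod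
  have h8 : (1 + sqrtd : GaussianInt)^8 = 16 := by
    have h1 : (1 + sqrtd : GaussianInt)^8 = ((1+sqrtd)^2)^4 := by ring
    rw [h1, pi_sq]
    have h2 : ((2:GaussianInt)*sqrtd)^4 = 16*(sqrtd^2)^2 := by ring
    rw [h2, sq_sqrtd]
    norm_num
  have hexp : (1 + sqrtd : GaussianInt)^(4*(τ+2)+2) = (1+sqrtd)^10 * ((1+sqrtd)^τ)^4 := by
    rw [← pow_mul, ← pow_add]
    congr 1
    omega
  apply no_quartic (τ+2) w q ((n^2 - (1+sqrtd)*m^2)*(n'^2+(1+sqrtd)*m'^2)) 1 (-1)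
    isUnit_one (Or.inr rfl) hπw hq0 hq_ne hrel
  rw [one_mul, hkey, hfac, hexp]
  linear_combination (((1+sqrtd:GaussianInt)^τ)^4*q^4*(1+sqrtd)^2)*h8
end

section
/- Let x, y, z be Gaussian integers with xyz ≠ 0, gcd(x, y) a unit, x not divisible by 1+i, y divisible by 1+i, and z^2 = x^4 + 6(1+i)·x^2y^2 + 2i·y^4. Then there exist Gaussian integers u' and v' such that u' + v' = z, u' - v' = x^2 + (1+i)·y^2, u'·v' = (1+i)·(x·y)^2, and u' and v' are coprime (their gcd is a unit). -/
set_option synthInstance.maxHeartbeats 1000000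
set_option maxHeartbeats 1000000

open Zsqrtd

lemma GaussianIntAux.sqrtd_sq : (sqrtd : GaussianInt) ^ 2 = -1 := by
  rw [sq, Zsqrtd.dmuld]; push_cast; ring

lemma GaussianIntAux.norm_one_add_sqrtd :
    Zsqrtd.norm ((1 : GaussianInt) + sqrtd) = 2 := by decide

lemma GaussianIntAux.prime_one_add_sqrtd : Prime ((1 : GaussianInt) + sqrtd) := by
  rw [← irreducible_iff_prime]
  constructor
  · intro h
    have := (Zsqrtd.norm_eq_one_iff' (by norm_num) _).2 h
    rw [GaussianIntAux.norm_one_add_sqrtd] at this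
    norm_num at this
  · intro a b hab
    have h2 : (Zsqrtd.norm a).natAbs * (Zsqrtd.norm b).natAbs = 2 := by
      rw [← Int.natAbs_mul, ← Zsqrtd.norm_mul, ← hab,
        GaussianIntAux.norm_one_add_sqrtd]
      rfl
    rcases Nat.prime_two.eq_one_or_self_of_dvd (Zsqrtd.norm a).natAbs
        ⟨_, h2.symm⟩ with h | h
    · exact Or.inl (Zsqrtd.norm_eq_one_iff.1 h)
    · right
      apply Zsqrtd.norm_eq_one_iff.1
      rw [h] at h2
      omega

/-- Resolvent factorization for the quartic `x⁴ + 6(1+i)x²y² + 2i·y⁴ = z²`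
over `ℤ[i]`: if `x, y, z` are Gaussian integers with `x * y * z ≠ 0`,
`gcd (x, y)` a unit, `x` odd (not divisible by `1 + i`), `y` even (divisible
by `1 + i`), and `z² = x⁴ + 6(1+i)x²y² + 2i·y⁴`, then there exist coprime
Gaussian integers `u'` and `v'` with `u' + v' = z`,
`u' - v' = x² + (1+i)·y²`, and `u'·v' = (1+i)·(x·y)²`. -/
theorem resolvent_factorization_one_add_i (x y z : GaussianInt)
    (hxyz : x * y * z ≠ 0)
    (hgcd : ∀ d : GaussianInt, d ∣ x → d ∣ y → IsUnit d)
    (hx : ¬ (1 + sqrtd) ∣ x) (hy : (1 + sqrtd) ∣ y)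
    (heq : z ^ 2 = x ^ 4 + 6 * (1 + sqrtd) * x ^ 2 * y ^ 2
        + 2 * sqrtd * y ^ 4) :
    ∃ u' v' : GaussianInt, u' + v' = z ∧
      u' - v' = x ^ 2 + (1 + sqrtd) * y ^ 2 ∧
      u' * v' = (1 + sqrtd) * (x * y) ^ 2 ∧
      (∀ d : GaussianInt, d ∣ u' → d ∣ v' → IsUnit d) := by
  obtain ⟨t, rfl⟩ := hy
  have hs := GaussianIntAux.sqrtd_sq
  have hπp := GaussianIntAux.prime_one_add_sqrtd
  set π : GaussianInt := 1 + sqrtd with hπdef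
  have hπ0 : π ≠ 0 := hπp.ne_zero
  have hx0 : x ≠ 0 := fun h => hxyz (by rw [h]; ring)
  have hz0 : z ≠ 0 := fun h => hxyz (by rw [h]; ring)
  have ht0 : t ≠ 0 := fun h => hxyz (by rw [h]; ring)
  -- z is odd
  have hπz : ¬ π ∣ z := by
    intro h
    apply hx
    apply hπp.dvd_of_dvd_pow (n := 4)
    have hz2 : π ∣ z ^ 2 := dvd_pow h two_ne_zero
    have hrest : π ∣ 6 * π * x ^ 2 * (π * t) ^ 2 + 2 * sqrtd * (π * t) ^ 4 :=
      ⟨6 * x ^ 2 * π ^ 2 * t ^ 2 + 2 * sqrtd * π ^ 3 * t ^ 4, by ring⟩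
    have hx4 : x ^ 4 = z ^ 2 -
        (6 * π * x ^ 2 * (π * t) ^ 2 + 2 * sqrtd * (π * t) ^ 4) := by
      linear_combination -heq
    rw [hx4]
    exact dvd_sub hz2 hrest
  -- key factorization of z² - x⁴
  have hzx : (z - x ^ 2) * (z + x ^ 2)
      = 12 * sqrtd * π * x ^ 2 * t ^ 2 - 8 * sqrtd * t ^ 4 := by
    linear_combination heq + (6 * π * x ^ 2 * t ^ 2
      + 2 * sqrtd * (sqrtd ^ 2 + 4 * sqrtd + 5) * t ^ 4) * hs
  have h1 : π ∣ (z - x ^ 2) * (z + x ^ 2) := by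
    rw [hzx]
    exact ⟨12 * sqrtd * x ^ 2 * t ^ 2 + 2 * sqrtd * π ^ 3 * t ^ 4, by
      linear_combination (-2 * sqrtd * t ^ 4 * (sqrtd ^ 2 + 4 * sqrtd + 5)) * hs⟩
  have h2x : π ∣ 2 * x ^ 2 :=
    ⟨-sqrtd * π * x ^ 2, by linear_combination x ^ 2 * (sqrtd + 2) * hs⟩
  have hsplit := hπp.2.2 _ _ h1
  have hd1 : π ∣ z - x ^ 2 := by
    rcases hsplit with h | h
    · exact h
    · have h' := dvd_sub h h2x
      have e : z + x ^ 2 - 2 * x ^ 2 = z - x ^ 2 := by ring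
      rwa [e] at h'
  have hd2 : π ∣ z + x ^ 2 := by
    have h' := dvd_add hd1 h2x
    have e : z - x ^ 2 + 2 * x ^ 2 = z + x ^ 2 := by ring
    rwa [e] at h'
  obtain ⟨a, ha⟩ := hd1
  obtain ⟨b, hb⟩ := hd2
  -- a * b is divisible by π
  have h7 : π ^ 2 * (a * b)
      = π ^ 4 * (-3 * π * sqrtd * x ^ 2 * t ^ 2 + 2 * sqrtd * t ^ 4) := by
    linear_combination hzx - (z + x ^ 2) * ha - (π * a) * hb
      + ((sqrtd ^ 2 + 4 * sqrtd + 5)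
        * (3 * sqrtd * π * x ^ 2 * t ^ 2 - 2 * sqrtd * t ^ 4)) * hs
  have hab : a * b = π ^ 2 * (-3 * π * sqrtd * x ^ 2 * t ^ 2 + 2 * sqrtd * t ^ 4) := by
    have hπ2 : (π ^ 2 : GaussianInt) ≠ 0 := pow_ne_zero 2 hπ0
    apply mul_left_cancel₀ hπ2
    rw [h7]; ring
  have hπab : π ∣ a * b :=
    ⟨π * (-3 * π * sqrtd * x ^ 2 * t ^ 2 + 2 * sqrtd * t ^ 4), by rw [hab]; ring⟩
  have h9 : π * (a + b) = π * (-sqrtd * π * z) := by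
    linear_combination -ha - hb + z * (sqrtd + 2) * hs
  have hsum : a + b = -sqrtd * π * z := mul_left_cancel₀ hπ0 h9
  -- both a and b are divisible by π
  have hπb : π ∣ b := by
    rcases hπp.2.2 _ _ hπab with h | h
    · have : π ∣ a + b := ⟨-sqrtd * z, by rw [hsum]; ring⟩
      have h' := dvd_sub this h
      have e : a + b - a = b := by ring
      rwa [e] at h'
    · exact h
  obtain ⟨b', hb'⟩ := hπb
  -- now 2 divides z + x² + π·y²
  have hdvd2 : (2 : GaussianInt) ∣ z + x ^ 2 + π * (π * t) ^ 2 :=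
    ⟨sqrtd * (b' + π * t ^ 2), by
      linear_combination hb + π * hb' + (b' + π * t ^ 2) * hs⟩
  obtain ⟨u, hu⟩ := hdvd2
  refine ⟨u, z - u, by ring, by linear_combination -hu, ?_, ?_⟩
  · -- u·v = π (xy)²
    have h4 : (4 : GaussianInt) * (u * (z - u))
        = 4 * (π * (x * (π * t)) ^ 2) := by
      linear_combination (x ^ 2 + π ^ 3 * t ^ 2 - z + 2 * u) * hu + heq
        + (-(π) ^ 4 * t ^ 4) * hs
    have h40 : (4 : GaussianInt) ≠ 0 := by decide
    exact mul_left_cancel₀ h40 h4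
  · -- coprimality
    intro d hdu hdv
    by_contra hdnu
    have huv : u * (z - u) = π * (x * (π * t)) ^ 2 := by
      have h4 : (4 : GaussianInt) * (u * (z - u))
          = 4 * (π * (x * (π * t)) ^ 2) := by
        linear_combination (x ^ 2 + π ^ 3 * t ^ 2 - z + 2 * u) * hu + heq
          + (-(π) ^ 4 * t ^ 4) * hs
      exact mul_left_cancel₀ (by decide : (4 : GaussianInt) ≠ 0) h4
    have hu0 : u ≠ 0 := by
      intro h
      apply hπ0
      have : u * (z - u) = 0 := by rw [h]; ring
      rw [huv] at this
      rcases mul_eq_zero.1 this with h' | h'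
      · exact h'
      · exact absurd (pow_eq_zero_iff two_ne_zero |>.1 h')
          (mul_ne_zero hx0 (mul_ne_zero hπ0 ht0))
    have hd0 : d ≠ 0 := by rintro rfl; exact hu0 (zero_dvd_iff.1 hdu)
    obtain ⟨p, hpirr, hpd⟩ := WfDvdMonoid.exists_irreducible_factor hdnu hd0
    have hpp : Prime p := irreducible_iff_prime.1 hpirr
    have hpu : p ∣ u := hpd.trans hdu
    have hpv : p ∣ z - u := hpd.trans hdv
    have hpz : p ∣ z := by
      have := dvd_add hpu hpv
      have e : u + (z - u) = z := by ring
      rwa [e] at this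
    have hpw : p ∣ x ^ 2 + π * (π * t) ^ 2 := by
      have := dvd_sub hpu hpv
      have e : u - (z - u) = x ^ 2 + π * (π * t) ^ 2 := by
        linear_combination -hu
      rwa [e] at this
    have hpπ : ¬ p ∣ π := by
      intro h
      exact hπz (((hpp.associated_of_dvd hπp h).symm.dvd).trans hpz)
    have hpprod : p ∣ π * (x * (π * t)) ^ 2 := by
      rw [← huv]; exact dvd_mul_of_dvd_left hpu _
    rcases hpp.2.2 _ _ hpprod with h | h
    · exact hpπ h
    · have hpxt : p ∣ x * (π * t) := hpp.dvd_of_dvd_pow h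
      rcases hpp.2.2 _ _ hpxt with hpx | hpyt
      · -- p divides x
        have hpx2 : p ∣ x ^ 2 := dvd_pow hpx two_ne_zero
        have hπy2 : p ∣ π * (π * t) ^ 2 := by
          have h' := dvd_sub hpw hpx2
          have e : x ^ 2 + π * (π * t) ^ 2 - x ^ 2 = π * (π * t) ^ 2 := by ring
          rwa [e] at h'
        rcases hpp.2.2 _ _ hπy2 with h' | h'
        · exact hpπ h'
        · exact hpp.not_unit (hgcd p hpx (hpp.dvd_of_dvd_pow h'))
      · -- p divides π * t
        have hπy2 : p ∣ π * (π * t) ^ 2 := by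
          have : p ∣ (π * t) ^ 2 := dvd_pow hpyt two_ne_zero
          exact dvd_mul_of_dvd_right this _
        have hpx2 : p ∣ x ^ 2 := by
          have h' := dvd_sub hpw hπy2
          have e : x ^ 2 + π * (π * t) ^ 2 - π * (π * t) ^ 2 = x ^ 2 := by ring
          rwa [e] at h'
        exact hpp.not_unit (hgcd p (hpp.dvd_of_dvd_pow hpx2) hpyt)
end
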